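/- With the notation of an abelian extension of Rota-Baxter systems and two sections t₁, t₂ of p, set γ := t₁ − t₂ : A → M and let (Ψᵢ, χ_{R,i}, χ_{S,i}) be the 2-cocycles associated to tᵢ. Then Ψ₁(a,b) − Ψ₂(a,b) = aγ(b) + γ(a)b − γ(ab), χ_{R,1}(a) − χ_{R,2}(a) = R_M(γ(a)) − γ(R(a)), and χ_{S,1}(a) − χ_{S,2}(a) = S_M(γ(a)) − γ(S(a)). Hence the two 2-cocycles differ by a coboundary. -/

import Mathlib

/-- Two sections `t₁, t₂` of an abelian extension of Rota-Baxter systems give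
2-cocycles differing by the coboundary of `γ = t₁ − t₂`. -/
theorem abelian_extension_cocycles_cohomologous
    {K A B : Type*} [Field K] [NonUnitalRing A] [Module K A]
    [NonUnitalRing B] [Module K B]
    (R S : A →ₗ[K] A) (Rh Sh : B →ₗ[K] B)
    (hRA : ∀ a b : A, R a * R b = R (R a * b + a * S b))
    (hSA : ∀ a b : A, S a * S b = S (R a * b + a * S b))
    (hRB : ∀ x y : B, Rh x * Rh y = Rh (Rh x * y + x * Sh y))
    (hSB : ∀ x y : B, Sh x * Sh y = Sh (Rh x * y + x * Sh y))
    (p : B →ₗ[K] A)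
    (hpmul : ∀ x y : B, p (x * y) = p x * p y)
    (hpsurj : Function.Surjective p)
    (hpR : ∀ x : B, p (Rh x) = R (p x))
    (hpS : ∀ x : B, p (Sh x) = S (p x))
    (hMM : ∀ x y : B, p x = 0 → p y = 0 → x * y = 0)
    (t : A →ₗ[K] B) (ht : ∀ a : A, p (t a) = a)
    (t₂ : A →ₗ[K] B) (ht₂ : ∀ a : A, p (t₂ a) = a) :
    let γ : A → B := fun a => t a - t₂ a
    (∀ a b : A,
      (t a * t b - t (a * b)) - (t₂ a * t₂ b - t₂ (a * b)) =
        t₂ a * γ b + γ a * t₂ b - γ (a * b)) ∧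
    (∀ a : A,
      (Rh (t a) - t (R a)) - (Rh (t₂ a) - t₂ (R a)) = Rh (γ a) - γ (R a)) ∧
    (∀ a : A,
      (Sh (t a) - t (S a)) - (Sh (t₂ a) - t₂ (S a)) = Sh (γ a) - γ (S a)) := by
  intro γ
  refine ⟨fun a b => ?_, fun a => by simp only [γ, map_sub]; abel, fun a => by simp only [γ, map_sub]; abel⟩
  have hγ : ∀ c : A, p (γ c) = 0 := by intro c; simp [γ, map_sub, ht, ht₂]
  have h0 : γ a * γ b = 0 := hMM _ _ (hγ a) (hγ b)
  have : t a * t b = t₂ a * t₂ b + t₂ a * γ b + γ a * t₂ b := by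
    have ha : t a = t₂ a + γ a := by simp [γ]
    have hb : t b = t₂ b + γ b := by simp [γ]
    rw [ha, hb]
    rw [mul_add, add_mul, add_mul, h0]; abel
  rw [this]; simp only [γ]; abel
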